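/- Let K ∈ 𝒮(ℝ²) be Schwartz and φ : ℝ² → ℂ satisfy ⟨x⟩^{2+ε}φ ∈ L^∞ for some ε > 0. Then for every x ∈ ℝ², n² Σ_{k∈ℤ²} |∫_{ℝ²} K(x−y) φ(ny−k) dy|² → |∫_{ℝ²} φ(z)dz|² · ∫_{ℝ²} |K(z)|² dz as n → ∞. -/

import Mathlib

open MeasureTheory Filter

noncomputable section

/-- ℝ² as a Euclidean space. -/
abbrev E2 : Type := EuclideanSpace ℝ (Fin 2)

/-- The lattice point `k ∈ ℤ²` viewed as a vector in ℝ². -/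
def latt (k : Fin 2 → ℤ) : E2 := WithLp.toLp 2 (fun i => (k i : ℝ))

open Real

lemma finrank_E2 : Module.finrank ℝ E2 = 2 := by
  simp [finrank_euclideanSpace_fin]

/-- change of variables: scaling + translation -/
lemma cov {F : Type*} [NormedAddCommGroup F] [NormedSpace ℝ F]
    (f : E2 → F) (n : ℕ) (hn : 1 ≤ n) (κ : E2) :
    ∫ w : E2, f ((n:ℝ)⁻¹ • (w + κ)) = ((n:ℝ)^2) • ∫ w : E2, f w := by
  have h1 : ∫ w : E2, f ((n:ℝ)⁻¹ • (w + κ)) = ∫ w : E2, f ((n:ℝ)⁻¹ • w) :=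
    integral_add_right_eq_self (fun w => f ((n:ℝ)⁻¹ • w)) κ
  rw [h1, MeasureTheory.Measure.integral_comp_smul (μ := volume) f ((n:ℝ)⁻¹), finrank_E2]
  have hn' : (0:ℝ) < n := by exact_mod_cast hn
  congr 1
  rw [abs_of_nonneg (by positivity)]
  field_simp

/-- Schwartz decay with 4th power -/
lemma Kdecay (K : SchwartzMap E2 ℂ) : ∃ C : ℝ, 0 ≤ C ∧ ∀ v, ‖K v‖ ≤ C * (1 + ‖v‖)^(-(4:ℝ)) := by
  obtain ⟨C, hC⟩ : ∃ C, ∀ v, (1 + ‖v‖)^(4:ℕ) * ‖K v‖ ≤ C := by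
    refine ⟨2 ^ 4 * (Finset.Iic ((4:ℕ),(0:ℕ))).sup (fun m => SchwartzMap.seminorm ℝ m.1 m.2) K, fun v => ?_⟩
    simpa [norm_iteratedFDeriv_zero] using
      SchwartzMap.one_add_le_sup_seminorm_apply (𝕜 := ℝ) (m := ((4:ℕ),(0:ℕ))) le_rfl le_rfl K v
  have hC0 : 0 ≤ C := le_trans (by positivity) (hC 0)
  refine ⟨C, hC0, fun v => ?_⟩
  have h1 : (0:ℝ) < 1 + ‖v‖ := by positivity
  have h2 : (1 + ‖v‖)^(-(4:ℝ)) = ((1 + ‖v‖)^(4:ℕ))⁻¹ := by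
    rw [rpow_neg h1.le, ← rpow_natCast (1 + ‖v‖) 4]; norm_num
  rw [h2, ← div_eq_mul_inv, le_div_iff₀ (by positivity), mul_comm]
  exact hC v

/-- bound on φ -/
lemma phibound (φ : E2 → ℂ) (ε M : ℝ) (hε : 0 < ε)
    (hφ : ∀ x : E2, (1 + ‖x‖ ^ 2) ^ ((2 + ε) / 2) * ‖φ x‖ ≤ M) :
    ∀ w, ‖φ w‖ ≤ (2 ^ ((2+ε)/2) * M) * (1 + ‖w‖)^(-(2+ε)) := by
  intro w
  have h1 : (0:ℝ) < 1 + ‖w‖ := by positivity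
  have h2 : (0:ℝ) < 1 + ‖w‖^2 := by positivity
  have key : (1 + ‖w‖)^((2+ε)) ≤ 2 ^ ((2+ε)/2) * (1 + ‖w‖^2) ^ ((2 + ε) / 2) := by
    have hsq : (1 + ‖w‖)^(2:ℕ) ≤ 2 * (1 + ‖w‖^2) := by
      nlinarith [sq_nonneg (1 - ‖w‖), norm_nonneg w]
    calc (1 + ‖w‖)^(2+ε) = ((1 + ‖w‖)^(2:ℕ)) ^ ((2+ε)/2) := by
          rw [← rpow_natCast (1 + ‖w‖) 2, ← rpow_mul h1.le]
          ring_nf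
      _ ≤ (2 * (1 + ‖w‖^2)) ^ ((2+ε)/2) := by
          apply rpow_le_rpow (by positivity) hsq (by positivity)
      _ = 2 ^ ((2+ε)/2) * (1 + ‖w‖^2) ^ ((2 + ε) / 2) := by
          rw [mul_rpow (by norm_num) h2.le]
  have hφw := hφ w
  rw [rpow_neg h1.le, ← div_eq_mul_inv, le_div_iff₀ (by positivity)]
  calc ‖φ w‖ * (1 + ‖w‖)^(2+ε) ≤ ‖φ w‖ * (2 ^ ((2+ε)/2) * (1 + ‖w‖^2) ^ ((2 + ε) / 2)) := by
        apply mul_le_mul_of_nonneg_left key (norm_nonneg _)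
    _ = 2 ^ ((2+ε)/2) * ((1 + ‖w‖^2) ^ ((2 + ε) / 2) * ‖φ w‖) := by ring
    _ ≤ 2 ^ ((2+ε)/2) * M := by
        apply mul_le_mul_of_nonneg_left hφw (by positivity)

lemma rpow_neg_two_eq {t : ℝ} (ht : 0 ≤ t) : t ^ (-(2:ℝ)) = (t^(2:ℕ))⁻¹ := by
  rw [rpow_neg ht, ← rpow_natCast t 2]; norm_num

lemma integrable_norm_comp (K : SchwartzMap E2 ℂ) (b : E2) (n : ℕ) (hn : 1 ≤ n) :
    Integrable (fun w : E2 => K (b - (n:ℝ)⁻¹ • w)) := by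
  have h0 : Integrable (fun w : E2 => K (b - w)) :=
    (integrable_comp_sub_left (fun v => K v) b).2 K.integrable
  have hn' : ((n:ℝ)⁻¹) ≠ 0 := by positivity
  exact (MeasureTheory.integrable_comp_smul_iff volume (fun w : E2 => K (b - w)) hn').2 h0

set_option maxHeartbeats 1000000 in
lemma core_bound (K : SchwartzMap E2 ℂ) (φ : E2 → ℂ) (C_K M₁ ε : ℝ)
    (hCK : 0 ≤ C_K) (hM₁ : 0 ≤ M₁) (hε : 0 < ε)
    (hK : ∀ v, ‖K v‖ ≤ C_K * (1 + ‖v‖)^(-(4:ℝ)))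
    (hφ1 : ∀ w, ‖φ w‖ ≤ M₁ * (1 + ‖w‖)^(-(2+ε))) :
    ∃ C : ℝ, 0 ≤ C ∧ ∀ (n : ℕ), 1 ≤ n → ∀ (a b : E2), ‖b - a‖ ≤ 2 →
      ∫ w : E2, ‖K (b - (n:ℝ)⁻¹ • w)‖ * ‖φ w‖ ≤ C * (1 + ‖a‖)^(-(2:ℝ)) := by
  have hfr : ((Module.finrank ℝ E2 : ℝ)) < 2 + ε := by rw [finrank_E2]; push_cast; linarith
  have iL : Integrable (fun w : E2 => (1 + ‖w‖)^(-(2+ε))) := integrable_one_add_norm hfr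
  set L : ℝ := ∫ w : E2, (1 + ‖w‖)^(-(2+ε)) with hL
  have hL0 : 0 ≤ L := integral_nonneg fun w => rpow_nonneg (by positivity) _
  set KL : ℝ := ∫ v : E2, ‖K v‖ with hKL
  have hKL0 : 0 ≤ KL := integral_nonneg fun w => norm_nonneg _
  refine ⟨1089 * C_K * M₁ * L + 256 * M₁ * KL, by positivity, fun n hn a b hba => ?_⟩
  have hn' : (0:ℝ) < n := by exact_mod_cast hn
  set r : ℝ := ‖a‖ with hr
  have hr0 : 0 ≤ r := norm_nonneg _
  set h₁ : E2 → ℝ := fun w => 1089 * C_K * M₁ * ((1+r)^(2:ℕ))⁻¹ * (1 + ‖w‖)^(-(2+ε)) with hh₁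
  set h₂ : E2 → ℝ := fun w =>
      256 * M₁ * ((n:ℝ)^(2:ℕ))⁻¹ * ((1+r)^(2:ℕ))⁻¹ * ‖K (b - (n:ℝ)⁻¹ • w)‖ with hh₂
  have key : ∀ w : E2, ‖K (b - (n:ℝ)⁻¹ • w)‖ * ‖φ w‖ ≤ h₁ w + h₂ w := by
    intro w
    have hKb : ‖K (b - (n:ℝ)⁻¹ • w)‖ ≤ C_K * (1 + ‖b - (n:ℝ)⁻¹ • w‖)^(-(4:ℝ)) := hK _
    have hv1 : (0:ℝ) < 1 + ‖b - (n:ℝ)⁻¹ • w‖ := by positivity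
    have hw1 : (0:ℝ) < 1 + ‖w‖ := by positivity
    have hφw : ‖φ w‖ ≤ M₁ * (1 + ‖w‖)^(-(2+ε)) := hφ1 w
    have hφnn : 0 ≤ ‖φ w‖ := norm_nonneg _
    have hrpnn : (0:ℝ) ≤ (1 + ‖w‖)^(-(2+ε)) := rpow_nonneg hw1.le _
    have hKnn : 0 ≤ ‖K (b - (n:ℝ)⁻¹ • w)‖ := norm_nonneg _
    have hh₂nn : 0 ≤ h₂ w := by positivity
    have hh₁nn : 0 ≤ h₁ w := by positivity
    rcases le_or_gt r 32 with hr32 | hr32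
    · -- small r : use h₁
      have hK1 : ‖K (b - (n:ℝ)⁻¹ • w)‖ ≤ C_K := by
        refine hKb.trans ?_
        have : (1 + ‖b - (n:ℝ)⁻¹ • w‖)^(-(4:ℝ)) ≤ 1 :=
          rpow_le_one_of_one_le_of_nonpos (by linarith [norm_nonneg (b - (n:ℝ)⁻¹ • w)]) (by norm_num)
        nlinarith
      have h33 : (1:ℝ) ≤ 1089 * ((1+r)^(2:ℕ))⁻¹ := by
        rw [le_mul_inv_iff₀ (by positivity), one_mul]
        nlinarith
      have : ‖K (b - (n:ℝ)⁻¹ • w)‖ * ‖φ w‖ ≤ C_K * (M₁ * (1 + ‖w‖)^(-(2+ε))) := by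
        exact mul_le_mul hK1 hφw hφnn hCK
      refine le_trans this (le_trans ?_ (le_add_of_nonneg_right hh₂nn))
      simp only [hh₁]
      nlinarith [mul_nonneg (mul_nonneg hCK hM₁) hrpnn]
    · rcases le_or_gt ‖w‖ ((n:ℝ) * r / 8) with hw | hw
      · -- middle region : use h₁ with factor 4
        have hinv : ‖(n:ℝ)⁻¹ • w‖ ≤ r / 8 := by
          rw [norm_smul, norm_inv, Real.norm_natCast]
          rw [inv_mul_le_iff₀ hn']
          calc ‖w‖ ≤ (n:ℝ) * r / 8 := hw
            _ = (n:ℝ) * (r/8) := by ring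
        have hvlow : r/2 ≤ ‖b - (n:ℝ)⁻¹ • w‖ := by
          have h1 : ‖a‖ - ‖b - a‖ - ‖(n:ℝ)⁻¹ • w‖ ≤ ‖b - (n:ℝ)⁻¹ • w‖ := by
            have h2 : ‖b - (n:ℝ)⁻¹ • w‖ ≥ ‖b‖ - ‖(n:ℝ)⁻¹ • w‖ := by
              have := norm_sub_norm_le b ((n:ℝ)⁻¹ • w); linarith [abs_le.mp (abs_norm_sub_norm_le b ((n:ℝ)⁻¹ • w))]
            have h3 : ‖a‖ - ‖b - a‖ ≤ ‖b‖ := by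
              have := norm_sub_norm_le a b
              have h4 : ‖a - b‖ = ‖b - a‖ := norm_sub_rev a b
              linarith [abs_le.mp (abs_norm_sub_norm_le a b)]
            linarith
          linarith
        have hK4 : ‖K (b - (n:ℝ)⁻¹ • w)‖ ≤ C_K * 4 * ((1+r)^(2:ℕ))⁻¹ := by
          have e4 : (1 + ‖b - (n:ℝ)⁻¹ • w‖)^(-(4:ℝ)) ≤ (1 + ‖b - (n:ℝ)⁻¹ • w‖)^(-(2:ℝ)) :=
            rpow_le_rpow_of_exponent_le (by linarith [norm_nonneg (b - (n:ℝ)⁻¹ • w)]) (by norm_num)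
          have e2 : (1 + ‖b - (n:ℝ)⁻¹ • w‖)^(-(2:ℝ)) = ((1 + ‖b - (n:ℝ)⁻¹ • w‖)^(2:ℕ))⁻¹ :=
            rpow_neg_two_eq hv1.le
          have e3 : ((1 + ‖b - (n:ℝ)⁻¹ • w‖)^(2:ℕ))⁻¹ ≤ 4 * ((1+r)^(2:ℕ))⁻¹ := by
            rw [inv_le_iff_one_le_mul₀ (by positivity)]
            have hq : (1+r)^(2:ℕ) ≤ 4 * (1 + ‖b - (n:ℝ)⁻¹ • w‖)^(2:ℕ) := by
              nlinarith [norm_nonneg (b - (n:ℝ)⁻¹ • w)]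
            calc (1:ℝ) = ((1+r)^(2:ℕ))⁻¹ * (1+r)^(2:ℕ) := by
                  rw [inv_mul_cancel₀ (by positivity)]
              _ ≤ ((1+r)^(2:ℕ))⁻¹ * (4 * (1 + ‖b - (n:ℝ)⁻¹ • w‖)^(2:ℕ)) := by
                  apply mul_le_mul_of_nonneg_left hq (by positivity)
              _ = 4 * ((1+r)^(2:ℕ))⁻¹ * (1 + ‖b - (n:ℝ)⁻¹ • w‖)^(2:ℕ) := by ring
            
          calc ‖K (b - (n:ℝ)⁻¹ • w)‖ ≤ C_K * (1 + ‖b - (n:ℝ)⁻¹ • w‖)^(-(4:ℝ)) := hKb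
            _ ≤ C_K * ((1 + ‖b - (n:ℝ)⁻¹ • w‖)^(2:ℕ))⁻¹ := by
                rw [← e2]; exact mul_le_mul_of_nonneg_left e4 hCK
            _ ≤ C_K * (4 * ((1+r)^(2:ℕ))⁻¹) := mul_le_mul_of_nonneg_left e3 hCK
            _ = C_K * 4 * ((1+r)^(2:ℕ))⁻¹ := by ring
        have : ‖K (b - (n:ℝ)⁻¹ • w)‖ * ‖φ w‖ ≤
            (C_K * 4 * ((1+r)^(2:ℕ))⁻¹) * (M₁ * (1 + ‖w‖)^(-(2+ε))) :=
          mul_le_mul hK4 hφw hφnn (by positivity)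
        refine le_trans this (le_trans ?_ (le_add_of_nonneg_right hh₂nn))
        simp only [hh₁]
        nlinarith [mul_nonneg (mul_nonneg hCK hM₁) hrpnn,
          mul_nonneg (mul_nonneg (mul_nonneg hCK hM₁) hrpnn) (inv_nonneg.2 (sq_nonneg (1+r)))]
      · -- outer region : use h₂
        have hφ2 : ‖φ w‖ ≤ 256 * M₁ * ((n:ℝ)^(2:ℕ))⁻¹ * ((1+r)^(2:ℕ))⁻¹ := by
          have e1 : (1 + ‖w‖)^(-(2+ε)) ≤ (1 + ‖w‖)^(-(2:ℝ)) :=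
            rpow_le_rpow_of_exponent_le (by linarith [norm_nonneg w]) (by linarith)
          have e2 : (1 + ‖w‖)^(-(2:ℝ)) = ((1 + ‖w‖)^(2:ℕ))⁻¹ := rpow_neg_two_eq hw1.le
          have e3 : ((1 + ‖w‖)^(2:ℕ))⁻¹ ≤ 256 * ((n:ℝ)^(2:ℕ))⁻¹ * ((1+r)^(2:ℕ))⁻¹ := by
            have hnr : (n:ℝ) * r / 8 < ‖w‖ := hw
            have hrr : (32:ℝ) < r := hr32
            have hq : (n:ℝ)^(2:ℕ) * (1+r)^(2:ℕ) ≤ 256 * (1 + ‖w‖)^(2:ℕ) := by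
              have h1r : (1+r)^(2:ℕ) ≤ 4 * r^(2:ℕ) := by nlinarith
              have h2' : (n:ℝ) * r / 8 ≤ ‖w‖ := le_of_lt hnr
              have hnr0 : 0 ≤ (n:ℝ) * r := by positivity
              have : ((n:ℝ) * r)^(2:ℕ) ≤ 64 * (1 + ‖w‖)^(2:ℕ) := by
                nlinarith [norm_nonneg w]
              nlinarith [sq_nonneg ((n:ℝ)*r), pow_pos hn' 2]
            rw [mul_assoc, ← mul_inv]
            rw [inv_le_iff_one_le_mul₀ (by positivity)]
            calc (1:ℝ) = (((n:ℝ)^(2:ℕ) * (1+r)^(2:ℕ)))⁻¹ * ((n:ℝ)^(2:ℕ) * (1+r)^(2:ℕ)) := by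
                  rw [inv_mul_cancel₀ (by positivity)]
              _ ≤ (((n:ℝ)^(2:ℕ) * (1+r)^(2:ℕ)))⁻¹ * (256 * (1 + ‖w‖)^(2:ℕ)) := by
                  apply mul_le_mul_of_nonneg_left hq (by positivity)
              _ = 256 * ((n:ℝ)^(2:ℕ) * (1+r)^(2:ℕ))⁻¹ * (1 + ‖w‖)^(2:ℕ) := by ring
          calc ‖φ w‖ ≤ M₁ * (1 + ‖w‖)^(-(2+ε)) := hφw
            _ ≤ M₁ * ((1 + ‖w‖)^(2:ℕ))⁻¹ := by
                rw [← e2]; exact mul_le_mul_of_nonneg_left e1 hM₁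
            _ ≤ M₁ * (256 * ((n:ℝ)^(2:ℕ))⁻¹ * ((1+r)^(2:ℕ))⁻¹) := mul_le_mul_of_nonneg_left e3 hM₁
            _ = 256 * M₁ * ((n:ℝ)^(2:ℕ))⁻¹ * ((1+r)^(2:ℕ))⁻¹ := by ring
        have : ‖K (b - (n:ℝ)⁻¹ • w)‖ * ‖φ w‖ ≤
            ‖K (b - (n:ℝ)⁻¹ • w)‖ * (256 * M₁ * ((n:ℝ)^(2:ℕ))⁻¹ * ((1+r)^(2:ℕ))⁻¹) :=
          mul_le_mul_of_nonneg_left hφ2 hKnn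
        refine le_trans this (le_trans ?_ (le_add_of_nonneg_left hh₁nn))
        simp only [hh₂]; ring_nf; exact le_refl _
  -- now integrate
  have ih₁ : Integrable h₁ := iL.const_mul _
  have iK' : Integrable (fun w : E2 => K (b - (n:ℝ)⁻¹ • w)) := integrable_norm_comp K b n hn
  have ih₂ : Integrable h₂ := (iK'.norm).const_mul _
  have step : ∫ w : E2, ‖K (b - (n:ℝ)⁻¹ • w)‖ * ‖φ w‖ ≤ (∫ w : E2, h₁ w) + ∫ w : E2, h₂ w := by
    rw [← integral_add ih₁ ih₂]
    exact integral_mono_of_nonneg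
      (ae_of_all _ fun w => mul_nonneg (norm_nonneg _) (norm_nonneg _)) (ih₁.add ih₂)
      (ae_of_all _ key)
  have e₁ : ∫ w : E2, h₁ w = 1089 * C_K * M₁ * ((1+r)^(2:ℕ))⁻¹ * L := by
    simp only [hh₁]; rw [integral_const_mul]
  have covK : ∫ w : E2, ‖K (b - (n:ℝ)⁻¹ • w)‖ = (n:ℝ)^2 * KL := by
    have h0 : ∀ w : E2, ‖K (b - (n:ℝ)⁻¹ • w)‖ = (fun v : E2 => ‖K (b - v)‖) ((n:ℝ)⁻¹ • (w + 0)) := by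
      intro w; simp
    calc ∫ w : E2, ‖K (b - (n:ℝ)⁻¹ • w)‖
        = ∫ w : E2, (fun v : E2 => ‖K (b - v)‖) ((n:ℝ)⁻¹ • (w + 0)) := by
          exact integral_congr_ae (ae_of_all _ h0)
      _ = (n:ℝ)^2 • ∫ v : E2, ‖K (b - v)‖ := cov (fun v : E2 => ‖K (b - v)‖) n hn 0
      _ = (n:ℝ)^2 * KL := by
          rw [integral_sub_left_eq_self (fun v : E2 => ‖K v‖) volume b, smul_eq_mul, hKL]
  have e₂ : ∫ w : E2, h₂ w = 256 * M₁ * ((1+r)^(2:ℕ))⁻¹ * KL := by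
    simp only [hh₂]
    rw [integral_const_mul, covK]
    have : ((n:ℝ)^(2:ℕ))⁻¹ * ((n:ℝ)^2) = 1 := inv_mul_cancel₀ (by positivity)
    field_simp
  rw [e₁, e₂] at step
  refine step.trans (le_of_eq ?_)
  rw [rpow_neg_two_eq (by positivity : (0:ℝ) ≤ 1 + ‖a‖)]
  ring

def fl (n : ℕ) (u : E2) : Fin 2 → ℤ := fun i => ⌊(n:ℝ) * u i⌋

lemma measurable_fl (n : ℕ) : Measurable (fl n) := by
  apply measurable_pi_lambda
  intro i
  apply Measurable.floor
  exact measurable_const.mul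
    ((measurable_pi_apply i).comp ((MeasurableEquiv.toLp 2 (Fin 2 → ℝ)).symm).measurable)

lemma vol_cube (n : ℕ) (hn : 1 ≤ n) (k : Fin 2 → ℤ) :
    volume {u : E2 | fl n u = k} = (ENNReal.ofReal ((n:ℝ)⁻¹))^2 := by
  have hn' : (0:ℝ) < n := by exact_mod_cast hn
  set S : Set (Fin 2 → ℝ) := Set.univ.pi fun i => Set.Ico ((k i : ℝ)/n) (((k i : ℝ)+1)/n) with hS
  have hSm : MeasurableSet S := MeasurableSet.univ_pi fun i => measurableSet_Ico
  have hpre : {u : E2 | fl n u = k} = ((MeasurableEquiv.toLp 2 (Fin 2 → ℝ)).symm) ⁻¹' S := by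
    ext u
    simp only [Set.mem_setOf_eq, Set.mem_preimage, hS, Set.mem_pi, Set.mem_univ, true_implies,
      Set.mem_Ico, funext_iff, fl]
    have hequ : ∀ j : Fin 2, ((MeasurableEquiv.toLp 2 (Fin 2 → ℝ)).symm) u j = u j := fun _ => rfl
    simp only [hequ]
    constructor
    · intro h i
      have := (Int.floor_eq_iff).1 (h i)
      constructor
      · rw [div_le_iff₀ hn']; linarith [this.1]
      · rw [lt_div_iff₀ hn']; linarith [this.2]
    · intro h i
      rw [Int.floor_eq_iff]
      obtain ⟨h1, h2⟩ := h i
      constructor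
      · rw [div_le_iff₀ hn'] at h1; linarith
      · rw [lt_div_iff₀ hn'] at h2; linarith
  rw [hpre, (EuclideanSpace.volume_preserving_symm_measurableEquiv_toLp (Fin 2)).measure_preimage
    hSm.nullMeasurableSet, hS, volume_pi_pi]
  have : ∀ i : Fin 2, volume (Set.Ico ((k i : ℝ)/n) (((k i : ℝ)+1)/n)) = ENNReal.ofReal ((n:ℝ)⁻¹) := by
    intro i
    rw [Real.volume_Ico]
    congr 1
    field_simp
    ring
  rw [Finset.prod_congr rfl (fun i _ => this i)]
  simp [Finset.prod_const]

lemma lint_partition (n : ℕ) (hn : 1 ≤ n) (F : (Fin 2 → ℤ) → ENNReal) :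
    ∫⁻ u : E2, F (fl n u) = ∑' k : Fin 2 → ℤ, F k * (ENNReal.ofReal ((n:ℝ)⁻¹))^2 := by
  have hmeas : ∀ k : Fin 2 → ℤ, MeasurableSet {u : E2 | fl n u = k} := fun k =>
    (measurable_fl n) (measurableSet_singleton k)
  have hdisj : Pairwise (Function.onFun Disjoint fun k : Fin 2 → ℤ => {u : E2 | fl n u = k}) := by
    intro k₁ k₂ hne
    simp only [Function.onFun, Set.disjoint_left, Set.mem_setOf_eq]
    rintro u rfl rfl
    exact hne rfl
  have hcover : (⋃ k : Fin 2 → ℤ, {u : E2 | fl n u = k}) = Set.univ := by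
    ext u; simp only [Set.mem_iUnion, Set.mem_setOf_eq, Set.mem_univ, iff_true]
    exact ⟨fl n u, rfl⟩
  calc ∫⁻ u : E2, F (fl n u)
      = ∫⁻ u in ⋃ k : Fin 2 → ℤ, {u : E2 | fl n u = k}, F (fl n u) := by
        rw [hcover, Measure.restrict_univ]
    _ = ∑' k : Fin 2 → ℤ, ∫⁻ u in {u : E2 | fl n u = k}, F (fl n u) := by
        rw [lintegral_iUnion hmeas hdisj]
    _ = ∑' k : Fin 2 → ℤ, F k * (ENNReal.ofReal ((n:ℝ)⁻¹))^2 := by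
        congr 1; funext k
        rw [setLIntegral_congr_fun (hmeas k) (fun u hu => by
          simp only [Set.mem_setOf_eq] at hu; rw [hu])]
        rw [setLIntegral_const, vol_cube n hn k]

lemma norm_le_of_coords (v : E2) (c : ℝ) (hc : 0 ≤ c) (h : ∀ i, |v i| ≤ c) : ‖v‖ ≤ 2 * c := by
  rw [EuclideanSpace.norm_eq]
  have hsum : ∑ i : Fin 2, ‖v i‖^2 ≤ (2*c)^2 := by
    rw [Fin.sum_univ_two]
    have h0 := h 0; have h1 := h 1
    rw [Real.norm_eq_abs, Real.norm_eq_abs]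
    nlinarith [abs_nonneg (v 0), abs_nonneg (v 1)]
  calc Real.sqrt (∑ i : Fin 2, ‖v i‖^2) ≤ Real.sqrt ((2*c)^2) := Real.sqrt_le_sqrt hsum
    _ = 2*c := Real.sqrt_sq (by positivity)

lemma lattdist (n : ℕ) (hn : 1 ≤ n) (u : E2) :
    ‖(n:ℝ)⁻¹ • latt (fl n u) - u‖ ≤ 2 * (n:ℝ)⁻¹ := by
  have hn' : (0:ℝ) < n := by exact_mod_cast hn
  apply norm_le_of_coords _ _ (by positivity)
  intro i
  have hco : ((n:ℝ)⁻¹ • latt (fl n u) - u) i = (n:ℝ)⁻¹ * (⌊(n:ℝ) * u i⌋ : ℝ) - u i := rfl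
  rw [hco]
  have h1 : ((⌊(n:ℝ) * u i⌋ : ℝ)) ≤ (n:ℝ) * u i := Int.floor_le _
  have h2 : (n:ℝ) * u i - 1 < (⌊(n:ℝ) * u i⌋ : ℝ) := Int.sub_one_lt_floor _
  have hpos : (0:ℝ) < (n:ℝ)⁻¹ := by positivity
  have e1 : (n:ℝ)⁻¹ * ((n:ℝ) * u i - 1) ≤ (n:ℝ)⁻¹ * (⌊(n:ℝ) * u i⌋ : ℝ) :=
    mul_le_mul_of_nonneg_left h2.le hpos.le
  have e2 : (n:ℝ)⁻¹ * (⌊(n:ℝ) * u i⌋ : ℝ) ≤ (n:ℝ)⁻¹ * ((n:ℝ) * u i) :=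
    mul_le_mul_of_nonneg_left h1 hpos.le
  have e3 : (n:ℝ)⁻¹ * ((n:ℝ) * u i) = u i := by field_simp
  have e4 : (n:ℝ)⁻¹ * ((n:ℝ) * u i - 1) = u i - (n:ℝ)⁻¹ := by field_simp
  rw [abs_le]
  constructor
  · linarith
  · linarith

lemma sum_eq_integral (n : ℕ) (hn : 1 ≤ n) (Fc : (Fin 2 → ℤ) → ℂ) :
    ∫ u : E2, ‖Fc (fl n u)‖^2 = ((n:ℝ)^2)⁻¹ * ∑' k : Fin 2 → ℤ, ‖Fc k‖^2 := by
  have hn' : (0:ℝ) < n := by exact_mod_cast hn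
  have hGm : Measurable (fun u : E2 => ‖Fc (fl n u)‖^(2:ℕ)) :=
    (((measurable_of_countable Fc).comp (measurable_fl n)).norm).pow_const 2
  rw [integral_eq_lintegral_of_nonneg_ae (ae_of_all _ fun u => sq_nonneg _)
    hGm.aestronglyMeasurable]
  have hpart := lint_partition n hn (fun k => ENNReal.ofReal (‖Fc k‖^2))
  rw [hpart, ENNReal.tsum_toReal_eq (fun k => ENNReal.mul_ne_top ENNReal.ofReal_ne_top
    (ENNReal.pow_ne_top ENNReal.ofReal_ne_top))]
  have : ∀ k : Fin 2 → ℤ, (ENNReal.ofReal (‖Fc k‖^2) * (ENNReal.ofReal ((n:ℝ)⁻¹))^2).toReal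
      = ‖Fc k‖^2 * (((n:ℝ))⁻¹)^2 := by
    intro k
    rw [ENNReal.toReal_mul, ENNReal.toReal_pow, ENNReal.toReal_ofReal (sq_nonneg _),
      ENNReal.toReal_ofReal (by positivity : (0:ℝ) ≤ (n:ℝ)⁻¹)]
  rw [tsum_congr this, tsum_mul_right]
  rw [inv_pow]
  ring

set_option maxHeartbeats 1000000 in
/-- for Schwartz `K` and a single-site potential `φ` with
`⟨x⟩^{2+ε} φ ∈ L^∞`,
`n² ∑_{k∈ℤ²} |∫ K(x-y) φ(ny-k) dy|² → |∫φ|² ∫|K|²`. -/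
theorem stmt15 (K : SchwartzMap E2 ℂ) (φ : E2 → ℂ) (ε M : ℝ) (hε : 0 < ε)
    (hφm : Measurable φ)
    (hφ : ∀ x : E2, (1 + ‖x‖ ^ 2) ^ ((2 + ε) / 2) * ‖φ x‖ ≤ M) (x : E2) :
    Tendsto (fun n : ℕ => (n : ℝ) ^ 2 * ∑' k : Fin 2 → ℤ,
        ‖∫ y : E2, K (x - y) * φ ((n : ℝ) • y - latt k)‖ ^ 2)
      atTop (nhds (‖∫ z : E2, φ z‖ ^ 2 * ∫ z : E2, ‖K z‖ ^ 2)) := by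
  obtain ⟨C_K, hCK0, hK⟩ := Kdecay K
  have hM0 : (0:ℝ) ≤ M := le_trans (by positivity) (hφ 0)
  set M₁ : ℝ := 2 ^ ((2+ε)/2) * M with hM₁def
  have hM₁0 : 0 ≤ M₁ := by positivity
  have hφ1 : ∀ w, ‖φ w‖ ≤ M₁ * (1 + ‖w‖)^(-(2+ε)) := phibound φ ε M hε hφ
  obtain ⟨C, hC0, hbound⟩ := core_bound K φ C_K M₁ ε hCK0 hM₁0 hε hK hφ1
  have hfr : ((Module.finrank ℝ E2 : ℝ)) < 2 + ε := by rw [finrank_E2]; push_cast; linarith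
  have hφi : Integrable φ := by
    refine ((integrable_one_add_norm hfr).const_mul M₁).mono'
      hφm.aestronglyMeasurable (ae_of_all _ fun w => ?_)
    exact hφ1 w
  set I : ℂ := ∫ z : E2, φ z with hI
  set Fc : ℕ → (Fin 2 → ℤ) → ℂ :=
    fun n k => ∫ w : E2, K (x - (n:ℝ)⁻¹ • (w + latt k)) * φ w with hFc
  set G : ℕ → E2 → ℂ := fun n u => Fc n (fl n u) with hG
  -- step 1 : sequence rewriting
  have hseq : ∀ n : ℕ, 1 ≤ n →
      (n : ℝ) ^ 2 * (∑' k : Fin 2 → ℤ, ‖∫ y : E2, K (x - y) * φ ((n : ℝ) • y - latt k)‖ ^ 2)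
        = ∫ u : E2, ‖G n u‖^2 := by
    intro n hn
    have hn' : (0:ℝ) < n := by exact_mod_cast hn
    have hck : ∀ k : Fin 2 → ℤ,
        (∫ y : E2, K (x - y) * φ ((n:ℝ) • y - latt k)) = ((n:ℝ)^2)⁻¹ • Fc n k := by
      intro k
      have harg : ∀ w : E2, (fun y : E2 => K (x - y) * φ ((n:ℝ) • y - latt k))
          ((n:ℝ)⁻¹ • (w + latt k)) = K (x - (n:ℝ)⁻¹ • (w + latt k)) * φ w := by
        intro w
        simp only [smul_smul, mul_inv_cancel₀ hn'.ne', one_smul, add_sub_cancel_right]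
      have hcov := cov (fun y : E2 => K (x - y) * φ ((n:ℝ) • y - latt k)) n hn (latt k)
      rw [integral_congr_ae (ae_of_all _ harg)] at hcov
      have : Fc n k = (n:ℝ)^2 • ∫ y : E2, K (x - y) * φ ((n:ℝ) • y - latt k) := hcov
      rw [this, smul_smul, inv_mul_cancel₀ (by positivity), one_smul]
    have hterm : ∀ k : Fin 2 → ℤ, ‖∫ y : E2, K (x - y) * φ ((n:ℝ) • y - latt k)‖^2
        = (((n:ℝ)^2)⁻¹)^2 * ‖Fc n k‖^2 := by
      intro k
      rw [hck k, norm_smul, Real.norm_eq_abs, abs_of_nonneg (by positivity), mul_pow]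
    rw [tsum_congr hterm, tsum_mul_left, sum_eq_integral n hn (Fc n)]
    have h2 : ((n:ℝ)^2) ≠ 0 := by positivity
    field_simp
  -- step 2 : dominated convergence
  set Dsq : E2 → ℝ := fun u => C^2 * (1 + ‖x - u‖)^(-(4:ℝ)) with hDsq
  have hDi : Integrable Dsq := by
    have h4 : ((Module.finrank ℝ E2 : ℝ)) < 4 := by rw [finrank_E2]; norm_num
    have : Integrable (fun v : E2 => (1 + ‖v‖)^(-(4:ℝ))) := integrable_one_add_norm h4
    exact ((integrable_comp_sub_left (fun v : E2 => (1 + ‖v‖)^(-(4:ℝ))) x).2 this).const_mul _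
  have hGbound : ∀ n : ℕ, 1 ≤ n → ∀ u : E2, ‖G n u‖^2 ≤ Dsq u := by
    intro n hn u
    have hn' : (0:ℝ) < n := by exact_mod_cast hn
    set κ : E2 := latt (fl n u) with hκ
    set b : E2 := x - (n:ℝ)⁻¹ • κ with hb
    have hdist : ‖b - (x - u)‖ ≤ 2 := by
      have : b - (x - u) = -((n:ℝ)⁻¹ • κ - u) := by rw [hb]; abel
      rw [this, norm_neg]
      refine (lattdist n hn u).trans ?_
      have : (n:ℝ)⁻¹ ≤ 1 := by
        rw [inv_le_one_iff₀]; right; exact_mod_cast hn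
      linarith
    have hGn : ‖G n u‖ ≤ C * (1 + ‖x - u‖)^(-(2:ℝ)) := by
      have h1 : ‖G n u‖ ≤ ∫ w : E2, ‖K (b - (n:ℝ)⁻¹ • w)‖ * ‖φ w‖ := by
        have e : ∀ w : E2, K (x - (n:ℝ)⁻¹ • (w + κ)) * φ w = K (b - (n:ℝ)⁻¹ • w) * φ w := by
          intro w
          congr 2
          rw [hb, smul_add]
          abel
        calc ‖G n u‖ = ‖∫ w : E2, K (b - (n:ℝ)⁻¹ • w) * φ w‖ := by
              rw [hG, hFc]
              exact congrArg _ (integral_congr_ae (ae_of_all _ e))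
          _ ≤ ∫ w : E2, ‖K (b - (n:ℝ)⁻¹ • w) * φ w‖ := norm_integral_le_integral_norm _
          _ = ∫ w : E2, ‖K (b - (n:ℝ)⁻¹ • w)‖ * ‖φ w‖ := by
              exact integral_congr_ae (ae_of_all _ fun w => norm_mul _ _)
      exact h1.trans (hbound n hn (x - u) b hdist)
    have hDnn : 0 ≤ C * (1 + ‖x - u‖)^(-(2:ℝ)) := by positivity
    have hsq := mul_self_le_mul_self (norm_nonneg (G n u)) hGn
    calc ‖G n u‖^2 = ‖G n u‖ * ‖G n u‖ := sq (‖G n u‖) ▸ by ring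
      _ ≤ (C * (1 + ‖x - u‖)^(-(2:ℝ))) * (C * (1 + ‖x - u‖)^(-(2:ℝ))) := hsq
      _ = Dsq u := by
          rw [hDsq]
          have hpos : (0:ℝ) < 1 + ‖x - u‖ := by positivity
          have : ((1 + ‖x - u‖)^(-(2:ℝ))) * ((1 + ‖x - u‖)^(-(2:ℝ)))
              = (1 + ‖x - u‖)^(-(4:ℝ)) := by
            rw [← rpow_add hpos]; norm_num
          calc (C * (1 + ‖x - u‖)^(-(2:ℝ))) * (C * (1 + ‖x - u‖)^(-(2:ℝ)))
              = C^2 * ((1 + ‖x - u‖)^(-(2:ℝ)) * (1 + ‖x - u‖)^(-(2:ℝ))) := by ring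
            _ = C^2 * (1 + ‖x - u‖)^(-(4:ℝ)) := by rw [this]
  -- pointwise limit
  have hlim : ∀ u : E2, Tendsto (fun n : ℕ => G n u) atTop (nhds (K (x - u) * I)) := by
    intro u
    have hargt : ∀ w : E2, Tendsto (fun n : ℕ => x - (n:ℝ)⁻¹ • (w + latt (fl n u)))
        atTop (nhds (x - u)) := by
      intro w
      rw [tendsto_iff_norm_sub_tendsto_zero]
      have hbd : ∀ n : ℕ, 1 ≤ n → ‖(x - (n:ℝ)⁻¹ • (w + latt (fl n u))) - (x - u)‖
          ≤ (‖w‖ + 2) * (n:ℝ)⁻¹ := by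
        intro n hn
        have e : (x - (n:ℝ)⁻¹ • (w + latt (fl n u))) - (x - u)
            = (-((n:ℝ)⁻¹ • w)) + -(((n:ℝ)⁻¹ • latt (fl n u)) - u) := by
          rw [smul_add]; abel
        rw [e]
        calc ‖(-((n:ℝ)⁻¹ • w)) + -(((n:ℝ)⁻¹ • latt (fl n u)) - u)‖
            ≤ ‖-((n:ℝ)⁻¹ • w)‖ + ‖-(((n:ℝ)⁻¹ • latt (fl n u)) - u)‖ := norm_add_le _ _
          _ = ‖(n:ℝ)⁻¹ • w‖ + ‖((n:ℝ)⁻¹ • latt (fl n u)) - u‖ := by rw [norm_neg, norm_neg]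
          _ ≤ (n:ℝ)⁻¹ * ‖w‖ + 2 * (n:ℝ)⁻¹ := by
              have h1 : ‖(n:ℝ)⁻¹ • w‖ = (n:ℝ)⁻¹ * ‖w‖ := by
                rw [norm_smul, Real.norm_eq_abs, abs_of_nonneg (by positivity)]
              have h2 := lattdist n hn u
              linarith [h2, h1.le, h1.ge]
          _ = (‖w‖ + 2) * (n:ℝ)⁻¹ := by ring
      have htend : Tendsto (fun n : ℕ => (‖w‖ + 2) * (n:ℝ)⁻¹) atTop (nhds 0) := by
        have := tendsto_inv_atTop_zero.comp (tendsto_natCast_atTop_atTop (R := ℝ))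
        simpa using this.const_mul (‖w‖ + 2)
      apply squeeze_zero' (Eventually.mono (eventually_ge_atTop 1)
        (fun n hn => norm_nonneg _)) (Eventually.mono (eventually_ge_atTop 1) hbd) htend
    have hinner : ∀ w : E2, Tendsto
        (fun n : ℕ => K (x - (n:ℝ)⁻¹ • (w + latt (fl n u))) * φ w) atTop
        (nhds (K (x - u) * φ w)) :=
      fun w => ((K.continuous.tendsto _).comp (hargt w)).mul tendsto_const_nhds
    have hdct : Tendsto (fun n : ℕ => G n u) atTop (nhds (∫ w : E2, K (x - u) * φ w)) := by
      apply tendsto_integral_filter_of_dominated_convergence (fun w => C_K * ‖φ w‖)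
      · filter_upwards with n
        apply AEStronglyMeasurable.mul _ hφm.aestronglyMeasurable
        exact (K.continuous.comp
          (continuous_const.sub (((continuous_id.add continuous_const)).const_smul ((n:ℝ)⁻¹)))).aestronglyMeasurable
      · filter_upwards with n
        filter_upwards with w
        rw [norm_mul]
        apply mul_le_mul_of_nonneg_right _ (norm_nonneg _)
        refine (hK _).trans ?_
        have : (1 + ‖x - (n:ℝ)⁻¹ • (w + latt (fl n u))‖)^(-(4:ℝ)) ≤ 1 :=
          rpow_le_one_of_one_le_of_nonpos
            (by linarith [norm_nonneg (x - (n:ℝ)⁻¹ • (w + latt (fl n u)))]) (by norm_num)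
        nlinarith
      · exact (hφi.norm).const_mul C_K
      · exact ae_of_all _ hinner
    have : (∫ w : E2, K (x - u) * φ w) = K (x - u) * I := integral_const_mul _ _
    rwa [this] at hdct
  -- outer dominated convergence
  have houter : Tendsto (fun n : ℕ => ∫ u : E2, ‖G n u‖^2) atTop
      (nhds (∫ u : E2, ‖K (x - u) * I‖^2)) := by
    apply tendsto_integral_filter_of_dominated_convergence Dsq
    · filter_upwards with n
      exact ((((measurable_of_countable (Fc n)).comp (measurable_fl n)).norm).pow_const
        2).aestronglyMeasurable
    · filter_upwards [eventually_ge_atTop 1] with n hn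
      filter_upwards with u
      rw [Real.norm_eq_abs, abs_of_nonneg (sq_nonneg _)]
      exact hGbound n hn u
    · exact hDi
    · refine ae_of_all _ fun u => ?_
      exact ((hlim u).norm).pow 2
  -- identify the limit
  have hval : (∫ u : E2, ‖K (x - u) * I‖^2) = ‖I‖^2 * ∫ z : E2, ‖K z‖^2 := by
    have e : ∀ u : E2, ‖K (x - u) * I‖^2 = ‖K (x - u)‖^2 * ‖I‖^2 := by
      intro u; rw [norm_mul, mul_pow]
    rw [integral_congr_ae (ae_of_all _ e), integral_mul_const,
      integral_sub_left_eq_self (fun v : E2 => ‖K v‖^2) volume x, mul_comm]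
  rw [hval] at houter
  refine Tendsto.congr' ?_ houter
  filter_upwards [eventually_ge_atTop 1] with n hn
  exact (hseq n hn).symm

end
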